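/- Let A be a commutative ring and n ≥ 2. For a matrix M ∈ SL_{n+1}(A), the following are equivalent: (1) there exists E ∈ E_{n+1}(A) such that the first row of M·E equals (1, 0, …, 0); (2) there exist F ∈ E_{n+1}(A) and M' ∈ SL_n(A) such that M·F is the block diagonal matrix with top-left entry 1, zero off-diagonal blocks, and bottom-right block M'. (This expresses the exactness of the sequence of pointed sets SL_n(A)/E_n(A) → SL_{n+1}(A)/E_{n+1}(A) → Um_{n+1}(A)/E_{n+1}(A).) -/

import Mathlib

/-- The subgroup `E_n(A)` of `GL_n(A)` generated by elementary matrices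
(transvections `1 + c·E_{ij}`, `i ≠ j`). -/
def ElementarySubgroup (n : ℕ) (A : Type*) [CommRing A] :
    Subgroup (Matrix (Fin n) (Fin n) A)ˣ :=
  Subgroup.closure
    {E : (Matrix (Fin n) (Fin n) A)ˣ |
      ∃ (i j : Fin n) (c : A), i ≠ j ∧ (E : Matrix (Fin n) (Fin n) A) = Matrix.transvection i j c}

lemma elem_det_one {m : ℕ} {A : Type*} [CommRing A]
    {E : (Matrix (Fin m) (Fin m) A)ˣ} (hE : E ∈ ElementarySubgroup m A) :
    (E : Matrix (Fin m) (Fin m) A).det = 1 := by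
  have hle : ElementarySubgroup m A ≤
      (Units.map (Matrix.detMonoidHom : Matrix (Fin m) (Fin m) A →* A)).ker := by
    rw [ElementarySubgroup, Subgroup.closure_le]
    rintro x ⟨i, j, c, hij, hx⟩
    simp only [SetLike.mem_coe, MonoidHom.mem_ker]
    ext
    simp [hx, Matrix.det_transvection_of_ne i j hij]
  have := hle hE
  rw [MonoidHom.mem_ker] at this
  have := congrArg Units.val this
  simpa using this

lemma mul_list_sum_zero {R : Type*} [Ring R] (a : R) :
    ∀ l : List R, (∀ x ∈ l, a * x = 0) → a * l.sum = 0 := by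
  intro l
  induction l with
  | nil => simp
  | cons b l ih =>
    intro h
    rw [List.sum_cons, mul_add, ih (fun x hx => h x (List.mem_cons_of_mem _ hx)),
      h b (List.mem_cons_self), zero_add]

lemma list_prod_one_add {R : Type*} [Ring R] {ι : Type*} (B : ι → R)
    (hB : ∀ i j, B i * B j = 0) :
    ∀ l : List ι, (l.map (fun i => 1 + B i)).prod = 1 + (l.map B).sum := by
  intro l
  induction l with
  | nil => simp
  | cons a l ih =>
    have h0 : B a * (l.map B).sum = 0 := by
      apply mul_list_sum_zero
      intro x hx
      obtain ⟨i, _, rfl⟩ := List.mem_map.1 hx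
      exact hB a i
    simp only [List.map_cons, List.prod_cons, ih, List.sum_cons]
    rw [add_mul, one_mul, mul_add, mul_one, h0]
    abel

theorem exactness_SL_Um {A : Type*} [CommRing A] (n : ℕ) (hn : 2 ≤ n)
    (M : Matrix (Fin (n + 1)) (Fin (n + 1)) A) (hM : M.det = 1) :
    (∃ E ∈ ElementarySubgroup (n + 1) A,
        (M * (E : Matrix (Fin (n + 1)) (Fin (n + 1)) A)) 0 =
          fun j => if j = 0 then 1 else 0) ↔
      (∃ F ∈ ElementarySubgroup (n + 1) A, ∃ M' : Matrix (Fin n) (Fin n) A,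
        M'.det = 1 ∧
          M * (F : Matrix (Fin (n + 1)) (Fin (n + 1)) A) =
            Matrix.reindex (finSumFinEquiv.trans (finCongr (Nat.add_comm 1 n)))
              (finSumFinEquiv.trans (finCongr (Nat.add_comm 1 n)))
              (Matrix.fromBlocks 1 0 0 M')) := by
  set e : Fin 1 ⊕ Fin n ≃ Fin (n + 1) := finSumFinEquiv.trans (finCongr (Nat.add_comm 1 n)) with he
  have hsymm0 : e.symm 0 = Sum.inl 0 := by
    rw [Equiv.symm_apply_eq]
    ext
    simp [he]
  have hsymms : ∀ k : Fin n, e.symm k.succ = Sum.inr k := by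
    intro k
    rw [Equiv.symm_apply_eq]
    ext
    simp [he, Nat.add_comm]
  constructor
  · rintro ⟨E, hE, hrow⟩
    set N : Matrix (Fin (n + 1)) (Fin (n + 1)) A := M * (E : Matrix (Fin (n + 1)) (Fin (n + 1)) A)
      with hN
    have hrow' : ∀ j, N 0 j = if j = 0 then 1 else 0 := fun j => congrFun hrow j
    have hdetN : N.det = 1 := by
      rw [hN, Matrix.det_mul, hM, elem_det_one hE, one_mul]
    set M₁ : Matrix (Fin n) (Fin n) A := N.submatrix Fin.succ Fin.succ with hM₁
    have hdetM₁ : M₁.det = 1 := by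
      rw [Matrix.det_succ_row_zero] at hdetN
      rw [Fin.sum_univ_succ] at hdetN
      simp only [hrow', Fin.succ_ne_zero, if_true, if_false, mul_zero, zero_mul,
        Finset.sum_const_zero, add_zero, Fin.val_zero, pow_zero, one_mul,
        Fin.succAbove_zero, if_pos rfl] at hdetN
      rw [← hdetN]
    have hunit : IsUnit M₁.det := by rw [hdetM₁]; exact isUnit_one
    set v : Fin n → A := fun i => N i.succ 0 with hv
    set c : Fin n → A := -(Matrix.mulVec M₁⁻¹ v) with hc
    have hMc : Matrix.mulVec M₁ c = -v := by
      rw [hc, Matrix.mulVec_neg, Matrix.mulVec_mulVec, Matrix.mul_nonsing_inv _ hunit,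
        Matrix.one_mulVec]
    -- elementary units
    set B : Fin n → Matrix (Fin (n + 1)) (Fin (n + 1)) A :=
      fun i => Matrix.single i.succ 0 (c i) with hB
    have hBB : ∀ i j, B i * B j = 0 := fun i j =>
      Matrix.single_mul_single_of_ne (h := (Fin.succ_ne_zero j).symm) ..
    have hTinv : ∀ i : Fin n,
        Matrix.transvection (i.succ : Fin (n+1)) 0 (c i) *
          Matrix.transvection i.succ 0 (-(c i)) = 1 := by
      intro i
      rw [Matrix.transvection_mul_transvection_same _ _ (Fin.succ_ne_zero i), add_neg_cancel,
        Matrix.transvection_zero]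
    have hTinv' : ∀ i : Fin n,
        Matrix.transvection (i.succ : Fin (n+1)) 0 (-(c i)) *
          Matrix.transvection i.succ 0 (c i) = 1 := by
      intro i
      rw [Matrix.transvection_mul_transvection_same _ _ (Fin.succ_ne_zero i), neg_add_cancel,
        Matrix.transvection_zero]
    set T : Fin n → (Matrix (Fin (n + 1)) (Fin (n + 1)) A)ˣ :=
      fun i => ⟨Matrix.transvection i.succ 0 (c i), Matrix.transvection i.succ 0 (-(c i)),
        hTinv i, hTinv' i⟩ with hT
    set L : List (Matrix (Fin (n + 1)) (Fin (n + 1)) A)ˣ := (List.finRange n).map T with hL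
    have hLmem : L.prod ∈ ElementarySubgroup (n + 1) A := by
      apply Subgroup.list_prod_mem
      intro x hx
      obtain ⟨i, _, rfl⟩ := List.mem_map.1 hx
      exact Subgroup.subset_closure ⟨i.succ, 0, c i, Fin.succ_ne_zero i, rfl⟩
    have hLval : (L.prod : Matrix (Fin (n + 1)) (Fin (n + 1)) A) = 1 + ∑ i, B i := by
      have : (L.prod : Matrix (Fin (n + 1)) (Fin (n + 1)) A)
          = ((List.finRange n).map (fun i => 1 + B i)).prod := by
        rw [hL, ← Units.coeHom_apply, map_list_prod, List.map_map]
        rfl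
      rw [this, list_prod_one_add B hBB, Fin.sum_univ_def]
    refine ⟨E * L.prod, mul_mem hE hLmem, M₁, hdetM₁, ?_⟩
    have hmul : M * ((E * L.prod : (Matrix (Fin (n + 1)) (Fin (n + 1)) A)ˣ) :
        Matrix (Fin (n + 1)) (Fin (n + 1)) A) = N + N * ∑ i, B i := by
      rw [Units.val_mul, ← Matrix.mul_assoc, ← hN, hLval, Matrix.mul_add, Matrix.mul_one]
    rw [hmul]
    ext k l
    have hsum : (N * ∑ i, B i) k l = if l = 0 then ∑ i, N k i.succ * c i else 0 := by
      rw [Matrix.mul_sum, Matrix.sum_apply]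
      by_cases hl : l = 0
      · subst hl
        simp [hB, Matrix.mul_single_apply_same]
      · rw [if_neg hl]
        refine Finset.sum_eq_zero fun i _ => ?_
        exact Matrix.mul_single_apply_of_ne (c := c i) i.succ 0 k l hl N
    rw [Matrix.add_apply, hsum, Matrix.reindex_apply, Matrix.submatrix_apply]
    refine Fin.cases ?_ (fun k' => ?_) k <;> refine Fin.cases ?_ (fun l' => ?_) l
    · rw [hsymm0]
      have : ∑ i, N 0 i.succ * c i = 0 := by
        apply Finset.sum_eq_zero
        intro i _
        rw [hrow' i.succ, if_neg (Fin.succ_ne_zero i), zero_mul]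
      simp [this, hrow' 0]
    · rw [hsymm0, hsymms]
      simp [hrow' l'.succ, Fin.succ_ne_zero l']
    · rw [hsymms, hsymm0]
      have : ∑ i, N k'.succ i.succ * c i = (Matrix.mulVec M₁ c) k' := by
        simp [Matrix.mulVec, dotProduct, hM₁]
      simp only [if_pos rfl, this, hMc, Pi.neg_apply, Matrix.fromBlocks_apply₂₁,
        Matrix.zero_apply]
      exact add_neg_cancel _
    · rw [hsymms, hsymms]
      simp [Fin.succ_ne_zero l', hM₁]
  · rintro ⟨F, hF, M', hdet, heq⟩
    refine ⟨F, hF, ?_⟩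
    funext j
    rw [heq]
    refine Fin.cases ?_ (fun j' => ?_) j
    · rw [Matrix.reindex_apply, Matrix.submatrix_apply, hsymm0]
      simp
    · rw [Matrix.reindex_apply, Matrix.submatrix_apply, hsymm0, hsymms]
      simp [Fin.succ_ne_zero j']
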